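/- Let p ≥ 1 and let G be a connected acyclic simple graph in which every vertex has degree p + 1, and fix a vertex x₀. Let α₊, α₋ be complex numbers with α₊·α₋ = 1/p and α₊ ≠ α₋, and set a₊ = (p·α₊ − α₋)/((p+1)(α₊ − α₋)) and a₋ = (p·α₋ − α₊)/((p+1)(α₊ − α₋)). Define the spherical function ψ(x) = a₊·α₊^{dist(x,x₀)} − a₋·α₋^{dist(x,x₀)}. Then ψ(x₀) = 1 and ψ is an eigenfunction of the adjacency operator: for every vertex x, Σ_{y adjacent to x} ψ(y) = p·(α₊ + α₋)·ψ(x). -/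

import Mathlib

variable {V : Type*}

open SimpleGraph

/-- In a tree, adjacent vertices have distinct distances to a fixed vertex. -/
lemma tree_adj_dist_ne (G : SimpleGraph V) (hconn : G.Connected) (hacyc : G.IsAcyclic)
    (x₀ x y : V) (hxy : G.Adj x y) : G.dist y x₀ ≠ G.dist x x₀ := by
  classical
  intro heq
  by_cases hd0 : G.dist x x₀ = 0
  · have hx : x = x₀ := (hconn.dist_eq_zero_iff).mp hd0
    have hy : y = x₀ := (hconn.dist_eq_zero_iff).mp (heq.trans hd0)
    exact G.irrefl (hx ▸ hy ▸ hxy)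
  · obtain ⟨Q, hQ⟩ := hconn.exists_walk_length_eq_dist y x₀
    have hQpath : Q.IsPath := Q.isPath_of_length_eq_dist hQ
    by_cases hx : x ∈ Q.support
    · have h1 : (Q.takeUntil x hx).length + (Q.dropUntil x hx).length = Q.length := by
        rw [← SimpleGraph.Walk.length_append, Q.take_spec hx]
      have h2 : G.dist x x₀ ≤ (Q.dropUntil x hx).length := SimpleGraph.dist_le _
      have h3 : (Q.takeUntil x hx).length ≠ 0 := by
        intro h0
        exact hxy.ne' (SimpleGraph.Walk.eq_of_length_eq_zero h0)
      omega
    · obtain ⟨P, hP⟩ := hconn.exists_walk_length_eq_dist x x₀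
      have hPpath : P.IsPath := P.isPath_of_length_eq_dist hP
      have hRpath : (SimpleGraph.Walk.cons hxy Q).IsPath := hQpath.cons hx
      have hPR : (⟨P, hPpath⟩ : G.Path x x₀) = ⟨SimpleGraph.Walk.cons hxy Q, hRpath⟩ :=
        hacyc.path_unique _ _
      have : P = SimpleGraph.Walk.cons hxy Q := congrArg Subtype.val hPR
      have hlen := congrArg SimpleGraph.Walk.length this
      rw [SimpleGraph.Walk.length_cons, hP, hQ, heq] at hlen
      omega

/-- In a tree adjacent vertices have distances to `x₀` differing by exactly one. -/
lemma tree_adj_dist_cases (G : SimpleGraph V) (hconn : G.Connected) (hacyc : G.IsAcyclic)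
    (x₀ x y : V) (hxy : G.Adj x y) :
    G.dist y x₀ = G.dist x x₀ + 1 ∨ G.dist y x₀ + 1 = G.dist x x₀ := by
  have h1 : G.dist y x₀ ≤ G.dist y x + G.dist x x₀ := hconn.dist_triangle
  have h2 : G.dist x x₀ ≤ G.dist x y + G.dist y x₀ := hconn.dist_triangle
  have hyx : G.dist y x = 1 := SimpleGraph.dist_eq_one_iff_adj.mpr hxy.symm
  have hxy1 : G.dist x y = 1 := SimpleGraph.dist_eq_one_iff_adj.mpr hxy
  have hne := tree_adj_dist_ne G hconn hacyc x₀ x y hxy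
  omega

/-- In a tree, a vertex `x ≠ x₀` has a unique neighbor closer to `x₀`. -/
lemma tree_unique_down (G : SimpleGraph V) (hconn : G.Connected) (hacyc : G.IsAcyclic)
    (x₀ x : V) (hx : x ≠ x₀) :
    ∃! y : V, G.Adj x y ∧ G.dist y x₀ + 1 = G.dist x x₀ := by
  classical
  obtain ⟨P, hP⟩ := hconn.exists_walk_length_eq_dist x x₀
  have hd : 0 < G.dist x x₀ := hconn.pos_dist_of_ne hx
  have hnil : ¬ P.Nil := SimpleGraph.Walk.not_nil_of_ne hx
  refine ⟨P.getVert 1, ⟨P.adj_snd hnil, ?_⟩, ?_⟩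
  · have hle : G.dist (P.getVert 1) x₀ ≤ P.tail.length := SimpleGraph.dist_le _
    have hlen : P.tail.length + 1 = P.length := SimpleGraph.Walk.length_tail_add_one hnil
    have hadj : G.Adj x (P.getVert 1) := P.adj_snd hnil
    have htri : G.dist x x₀ ≤ G.dist x (P.getVert 1) + G.dist (P.getVert 1) x₀ :=
      hconn.dist_triangle
    have h1 : G.dist x (P.getVert 1) = 1 := SimpleGraph.dist_eq_one_iff_adj.mpr hadj
    omega
  · rintro y ⟨hadj, hdist⟩
    -- both `y` and `P.getVert 1` are "down" neighbors; show any two down neighbors agree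
    have key : ∀ z : V, G.Adj x z → G.dist z x₀ + 1 = G.dist x x₀ →
        ∃ (Q : G.Walk z x₀) (hQ : Q.IsPath) (hxQ : x ∉ Q.support), True := by
      intro z hz hzd
      obtain ⟨Q, hQ⟩ := hconn.exists_walk_length_eq_dist z x₀
      have hQpath : Q.IsPath := Q.isPath_of_length_eq_dist hQ
      refine ⟨Q, hQpath, ?_, trivial⟩
      intro hmem
      have h2 : G.dist x x₀ ≤ (Q.dropUntil x hmem).length := SimpleGraph.dist_le _
      have h3 : (Q.dropUntil x hmem).length ≤ Q.length :=
        SimpleGraph.Walk.length_dropUntil_le Q hmem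
      omega
    obtain ⟨Q₁, hQ₁, hxQ₁, -⟩ := key y hadj hdist
    obtain ⟨Q₂, hQ₂, hxQ₂, -⟩ := key (P.getVert 1) (P.adj_snd hnil) (by
      have hle : G.dist (P.getVert 1) x₀ ≤ P.tail.length := SimpleGraph.dist_le _
      have hlen : P.tail.length + 1 = P.length := SimpleGraph.Walk.length_tail_add_one hnil
      have htri : G.dist x x₀ ≤ G.dist x (P.getVert 1) + G.dist (P.getVert 1) x₀ :=
        hconn.dist_triangle
      have h1 : G.dist x (P.getVert 1) = 1 :=
        SimpleGraph.dist_eq_one_iff_adj.mpr (P.adj_snd hnil)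
      omega)
    have hR₁ : (SimpleGraph.Walk.cons hadj Q₁).IsPath := hQ₁.cons hxQ₁
    have hR₂ : (SimpleGraph.Walk.cons (P.adj_snd hnil) Q₂).IsPath := hQ₂.cons hxQ₂
    have hPR : (⟨_, hR₁⟩ : G.Path x x₀) = ⟨_, hR₂⟩ := hacyc.path_unique _ _
    have hw : SimpleGraph.Walk.cons hadj Q₁ = SimpleGraph.Walk.cons (P.adj_snd hnil) Q₂ :=
      congrArg Subtype.val hPR
    have := congrArg (fun w : G.Walk x x₀ => w.getVert 1) hw
    simpa using this

/-- **Spherical function on the `(p+1)`-regular tree**: with `α₊·α₋ = 1/p` and the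
Harish-Chandra coefficients `a₊ = (p·α₊ − α₋)/((p+1)(α₊ − α₋))`,
`a₋ = (p·α₋ − α₊)/((p+1)(α₊ − α₋))`, the function
`ψ(x) = a₊·α₊^{dist(x,x₀)} − a₋·α₋^{dist(x,x₀)}` satisfies `ψ(x₀) = 1` and is an
eigenfunction of the adjacency operator with eigenvalue `p·(α₊ + α₋)`. -/
theorem spherical_function_eigen (p : ℕ) (hp : 1 ≤ p)
    (G : SimpleGraph V) [G.LocallyFinite]
    (hconn : G.Connected) (hacyc : G.IsAcyclic)
    (hreg : ∀ v : V, G.degree v = p + 1)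
    (x₀ : V) (αp αm : ℂ) (hprod : αp * αm = 1 / (p : ℂ)) (hne : αp ≠ αm)
    (ap am : ℂ)
    (hap : ap = ((p : ℂ) * αp - αm) / (((p : ℂ) + 1) * (αp - αm)))
    (ham : am = ((p : ℂ) * αm - αp) / (((p : ℂ) + 1) * (αp - αm)))
    (ψ : V → ℂ)
    (hψ : ∀ x : V, ψ x = ap * αp ^ G.dist x x₀ - am * αm ^ G.dist x x₀) :
    ψ x₀ = 1 ∧
    ∀ x : V, (∑ y ∈ G.neighborFinset x, ψ y) = (p : ℂ) * (αp + αm) * ψ x := by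
  classical
  have hd : αp - αm ≠ 0 := sub_ne_zero.mpr hne
  have hp0 : (p : ℂ) ≠ 0 := Nat.cast_ne_zero.mpr (by omega)
  have hp1 : ((p : ℂ) + 1) ≠ 0 := Nat.cast_add_one_ne_zero p
  have h1 : (p : ℂ) * (αp * αm) = 1 := by rw [hprod]; field_simp
  have hψ0 : ψ x₀ = 1 := by
    rw [hψ x₀, SimpleGraph.dist_self]
    simp only [pow_zero, mul_one, hap, ham]
    field_simp
    ring
  refine ⟨hψ0, fun x => ?_⟩
  by_cases hx : x = x₀
  · subst hx
    have hconst : ∀ y ∈ G.neighborFinset x, ψ y = ap * αp - am * αm := by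
      intro y hy
      rw [SimpleGraph.mem_neighborFinset] at hy
      have : G.dist y x = 1 := SimpleGraph.dist_eq_one_iff_adj.mpr hy.symm
      rw [hψ y, this, pow_one, pow_one]
    rw [Finset.sum_congr rfl hconst, Finset.sum_const]
    have hcard : (G.neighborFinset x).card = p + 1 := by
      rw [← hreg x]; rfl
    rw [hcard, hψ0, mul_one, hap, ham]
    rw [nsmul_eq_mul]
    push_cast
    field_simp
    ring
  · obtain ⟨y₀, ⟨hadj₀, hdist₀⟩, huniq⟩ := tree_unique_down G hconn hacyc x₀ x hx
    set k := G.dist y₀ x₀ with hk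
    have hmem : y₀ ∈ G.neighborFinset x := (SimpleGraph.mem_neighborFinset G x y₀).mpr hadj₀
    have hup : ∀ y ∈ (G.neighborFinset x).erase y₀, ψ y = ap * αp ^ (k + 2) - am * αm ^ (k + 2) := by
      intro y hy
      obtain ⟨hyne, hymem⟩ := Finset.mem_erase.mp hy
      rw [SimpleGraph.mem_neighborFinset] at hymem
      have hcases := tree_adj_dist_cases G hconn hacyc x₀ x y hymem
      have hyd : G.dist y x₀ = k + 2 := by
        rcases hcases with h | h
        · omega
        · exact absurd (huniq y ⟨hymem, h⟩) hyne
      rw [hψ y, hyd]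
    have hsum : ∑ y ∈ G.neighborFinset x, ψ y
        = ψ y₀ + ∑ y ∈ (G.neighborFinset x).erase y₀, ψ y :=
      (Finset.add_sum_erase _ ψ hmem).symm
    have hcard : ((G.neighborFinset x).erase y₀).card = p := by
      rw [Finset.card_erase_of_mem hmem]
      have : (G.neighborFinset x).card = p + 1 := by rw [← hreg x]; rfl
      omega
    rw [hsum, Finset.sum_congr rfl hup, Finset.sum_const, hcard, hψ x, ← hdist₀, hψ y₀, ← hk]
    have : (k : ℕ) + 1 = k + 1 := rfl
    linear_combination (am * αm ^ k - ap * αp ^ k) * h1
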